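/- The value of the n-th cyclotomic polynomial at i (the imaginary unit) is: Φ_1(i) = i−1, Φ_2(i) = i+1, Φ_4(i) = 0, Φ_{4p^k}(i) = p for any prime p and k ≥ 1, Φ_{q^k}(i) = (−1)^{k+1} i and Φ_{2q^k}(i) = (−1)^k i for any prime q ≡ 3 (mod 4) and k ≥ 1, Φ_{q^k r^l}(i) = Φ_{2 q^k r^l}(i) = −1 for distinct primes q, r ≡ 3 (mod 4) and k, l ≥ 1, and Φ_n(i) = 1 in all other cases. -/
import Mathlib


open Polynomial Complex

lemma conjF (n : ℕ) : (starRingEnd ℂ) ((cyclotomic n ℂ).eval I) = (cyclotomic n ℂ).eval (-I) := by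
  rw [← Complex.conj_I, ← eval₂_at_apply, ← eval_map, map_cyclotomic]

lemma R1C {p n : ℕ} (hp : p.Prime) (h : p ∣ n) (x : ℂ) :
    (cyclotomic (n * p) ℂ).eval x = (cyclotomic n ℂ).eval (x ^ p) := by
  rw [← cyclotomic_expand_eq_cyclotomic hp h, expand_eval]

lemma R2C {p n : ℕ} (hp : p.Prime) (h : ¬ p ∣ n) (x : ℂ) :
    (cyclotomic (n * p) ℂ).eval x * (cyclotomic n ℂ).eval x = (cyclotomic n ℂ).eval (x ^ p) := by
  rw [← eval_mul, ← cyclotomic_expand_eq_cyclotomic_mul hp h, expand_eval]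

lemma Ipow_mod {l : ℕ} : I ^ l = I ^ (l % 4) := by
  conv_lhs => rw [← Nat.div_add_mod l 4]
  rw [pow_add, pow_mul, Complex.I_pow_four, one_pow, one_mul]

lemma primI : IsPrimitiveRoot I 4 := by
  constructor
  · exact Complex.I_pow_four
  · intro l hl
    rw [Ipow_mod] at hl
    have h : l % 4 = 0 ∨ l % 4 = 1 ∨ l % 4 = 2 ∨ l % 4 = 3 := by omega
    rcases h with h | h | h | h <;> rw [h] at hl
    · exact Nat.dvd_of_mod_eq_zero h
    · simp [Complex.ext_iff] at hl
    · rw [pow_two, Complex.I_mul_I] at hl; norm_num at hl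
    · rw [pow_succ, pow_two, Complex.I_mul_I, neg_one_mul] at hl
      simp [Complex.ext_iff] at hl

lemma Fne0 {n : ℕ} (h : n ≠ 4) : (cyclotomic n ℂ).eval I ≠ 0 := by
  intro h0
  rcases Nat.eq_zero_or_pos n with rfl | hn
  · simp [cyclotomic_zero] at h0
  · have : NeZero (n : ℂ) := ⟨Nat.cast_ne_zero.2 hn.ne'⟩
    have := (Polynomial.isRoot_cyclotomic_iff (R := ℂ) (n := n)).1 h0
    exact h (this.unique primI)

lemma Ipow1 {p : ℕ} (h : p % 4 = 1) : I ^ p = I := by rw [Ipow_mod, h, pow_one]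
lemma Ipow3 {p : ℕ} (h : p % 4 = 3) : I ^ p = -I := by
  rw [Ipow_mod, h, pow_succ, pow_two, Complex.I_mul_I, neg_one_mul]

lemma I_ne_one' : (I : ℂ) ≠ 1 := by simp [Complex.ext_iff]

lemma prime_negone {p : ℕ} (hp : p.Prime) (hodd : p % 2 = 1) :
    (cyclotomic p ℂ).eval (-1) = 1 := by
  haveI : Fact p.Prime := ⟨hp⟩
  rw [cyclotomic_prime, eval_finset_sum]
  simp only [eval_pow, eval_X]
  rw [neg_one_geom_sum, if_neg]
  simp [Nat.even_iff, hodd]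

lemma negOneOdd : ∀ m, Odd m → 1 < m → (cyclotomic m ℂ).eval (-1) = 1 := by
  intro m
  induction m using Nat.strong_induction_on with
  | _ m ih =>
    intro hodd hm
    set p := m.minFac with hpdef
    have hp : p.Prime := Nat.minFac_prime (by omega)
    have hpd : p ∣ m := Nat.minFac_dvd m
    have hpodd : p % 2 = 1 := by
      rcases hp.eq_two_or_odd with h | h
      · exfalso; rw [Nat.odd_iff] at hodd
        have := Nat.mod_mod_of_dvd m (by norm_num : 2 ∣ 2)
        have h2 : (2:ℕ) ∣ m := h ▸ hpd
        omega
      · exact h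
    have hneg : ((-1 : ℂ)) ^ p = -1 := Odd.neg_one_pow (Nat.odd_iff.2 hpodd)
    set t := m / p with htdef
    have hmt : t * p = m := Nat.div_mul_cancel hpd
    have htodd : Odd t := by
      rcases hodd with ⟨j, hj⟩
      rw [Nat.odd_iff]
      by_contra h
      have : 2 ∣ t := by omega
      have : 2 ∣ m := by rw [← hmt]; exact Dvd.dvd.mul_right this p
      omega
    rcases Nat.lt_or_ge 1 t with ht1 | ht1
    · have htm : t < m := by
        rw [← hmt]; nlinarith [hp.two_le]
      have hIH := ih t htm htodd ht1
      by_cases hpt : p ∣ t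
      · rw [← hmt, R1C hp hpt, hneg, hIH]
      · have := R2C hp hpt (-1 : ℂ)
        rw [hneg, hIH, mul_one] at this
        rw [← hmt]; exact this
    · have ht : t = 1 := by
        rcases Nat.eq_zero_or_pos t with h | h
        · rw [h, zero_mul] at hmt; omega
        · omega
      have hmp : m = p := by rw [← hmt, ht, one_mul]
      rw [hmp]; exact prime_negone hp hpodd

lemma FprimeI1 {p : ℕ} (hp : p.Prime) (h1 : p % 4 = 1) : (cyclotomic p ℂ).eval I = 1 := by
  haveI : Fact p.Prime := ⟨hp⟩
  rw [cyclotomic_prime, eval_finset_sum]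
  simp only [eval_pow, eval_X]
  rw [geom_sum_eq I_ne_one', Ipow1 h1]
  rw [div_eq_one_iff_eq]
  exact sub_ne_zero.2 I_ne_one'

lemma FprimeI3 {p : ℕ} (hp : p.Prime) (h3 : p % 4 = 3) : (cyclotomic p ℂ).eval I = I := by
  haveI : Fact p.Prime := ⟨hp⟩
  rw [cyclotomic_prime, eval_finset_sum]
  simp only [eval_pow, eval_X]
  rw [geom_sum_eq I_ne_one', Ipow3 h3]
  rw [div_eq_iff (sub_ne_zero.2 I_ne_one')]
  ring_nf
  rw [Complex.I_sq]
  ring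

lemma conj_half {n : ℕ} (x : ℂ) (h : (cyclotomic n ℂ).eval I = x) :
    (cyclotomic n ℂ).eval (-I) = (starRingEnd ℂ) x := by
  rw [← conjF, h]

lemma Fqk {q : ℕ} (hq : q.Prime) (h3 : q % 4 = 3) :
    ∀ k, 1 ≤ k → (cyclotomic (q ^ k) ℂ).eval I = (-1) ^ (k + 1) * I := by
  intro k hk
  induction k with
  | zero => omega
  | succ k ih =>
    rcases Nat.eq_zero_or_pos k with rfl | hk'
    · rw [pow_one]
      rw [FprimeI3 hq h3]
      norm_num
    · have hqk := ih hk'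
      rw [pow_succ, R1C hq (dvd_pow_self q (by omega : k ≠ 0)), Ipow3 h3,
        conj_half _ hqk]
      rw [map_mul, map_pow, map_neg, map_one, Complex.conj_I]
      ring

lemma Fqkrl {q r : ℕ} (hq : q.Prime) (hr : r.Prime) (h3q : q % 4 = 3) (h3r : r % 4 = 3)
    (hne : q ≠ r) {k : ℕ} (hk : 1 ≤ k) :
    ∀ l, 1 ≤ l → (cyclotomic (q ^ k * r ^ l) ℂ).eval I = -1 := by
  have hrq : ¬ r ∣ q ^ k := by
    intro h
    exact hne ((Nat.prime_dvd_prime_iff_eq hr hq).1 (hr.dvd_of_dvd_pow h)).symm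
  intro l hl
  induction l with
  | zero => omega
  | succ l ih =>
    rcases Nat.eq_zero_or_pos l with rfl | hl'
    · rw [pow_one]
      have h2 := R2C hr hrq I
      rw [Ipow3 h3r, conj_half _ (Fqk hq h3q k hk), Fqk hq h3q k hk] at h2
      rw [map_mul, map_pow, map_neg, map_one, Complex.conj_I] at h2
      have hne0 : ((-1 : ℂ)) ^ (k + 1) * I ≠ 0 := by
        apply mul_ne_zero
        · exact pow_ne_zero _ (by norm_num)
        · exact Complex.I_ne_zero
      have : (cyclotomic (q ^ k * r) ℂ).eval I * ((-1) ^ (k + 1) * I) =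
          (-1) * ((-1) ^ (k + 1) * I) := by rw [h2]; ring
      exact mul_right_cancel₀ hne0 this
    · have hprev := ih hl'
      have : q ^ k * r ^ (l + 1) = (q ^ k * r ^ l) * r := by ring
      rw [this, R1C hr (Dvd.dvd.mul_left (dvd_pow_self r (by omega : l ≠ 0)) _), Ipow3 h3r,
        conj_half _ hprev]
      simp

lemma F2odd {m : ℕ} (hodd : Odd m) (hm : 1 < m) :
    (cyclotomic (2 * m) ℂ).eval I * (cyclotomic m ℂ).eval I = 1 := by
  have h2 : ¬ (2 ∣ m) := by rw [Nat.odd_iff] at hodd; omega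
  have := R2C Nat.prime_two h2 I
  rw [show m * 2 = 2 * m by ring] at this
  rw [this, pow_two, Complex.I_mul_I, negOneOdd m hodd hm]

lemma F4mul {t : ℕ} : (cyclotomic (4 * t) ℂ).eval I = (cyclotomic (2 * t) ℂ).eval (-1) := by
  have := R1C Nat.prime_two (dvd_mul_right 2 t) I
  rw [show 2 * t * 2 = 4 * t by ring] at this
  rw [this, pow_two, Complex.I_mul_I]

lemma negone2t {t : ℕ} (ht : 2 ≤ t) :
    (cyclotomic (2 * t) ℂ).eval (-1) = (cyclotomic t ℂ).eval 1 := by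
  by_cases h2 : 2 ∣ t
  · have := R1C Nat.prime_two h2 (-1 : ℂ)
    rw [show t * 2 = 2 * t by ring] at this
    rw [this]; norm_num
  · have := R2C Nat.prime_two h2 (-1 : ℂ)
    rw [show t * 2 = 2 * t by ring, negOneOdd t (Nat.odd_iff.2 (by omega)) ht, mul_one] at this
    rw [this]; norm_num

lemma oddLemma : ∀ n : ℕ, Odd n → 1 < n →
    (¬ ∃ q k : ℕ, q.Prime ∧ q % 4 = 3 ∧ 1 ≤ k ∧ n = q ^ k) →
    (¬ ∃ q r k l : ℕ, q.Prime ∧ r.Prime ∧ q % 4 = 3 ∧ r % 4 = 3 ∧ q ≠ r ∧ 1 ≤ k ∧ 1 ≤ l ∧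
      n = q ^ k * r ^ l) →
    (cyclotomic n ℂ).eval I = 1 := by
  intro n
  induction n using Nat.strong_induction_on with
  | _ n ih =>
    intro hodd hn hyp1 hyp2
    set p := n.minFac with hpdef
    have hp : p.Prime := Nat.minFac_prime (by omega)
    have hpd : p ∣ n := Nat.minFac_dvd n
    have hnodd2 : n % 2 = 1 := Nat.odd_iff.1 hodd
    have hpodd : p % 2 = 1 := by
      rcases hp.eq_two_or_odd with h | h
      · exfalso; rw [h] at hpd; rcases hpd with ⟨c, hc⟩; omega
      · exact h
    have hp4 : p % 4 = 1 ∨ p % 4 = 3 := by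
      have := Nat.mod_mod_of_dvd p (by norm_num : 2 ∣ 4)
      omega
    set t := n / p with htdef
    have hmt : t * p = n := Nat.div_mul_cancel hpd
    have ht1 : 1 ≤ t := by
      rcases Nat.eq_zero_or_pos t with h | h
      · rw [h, zero_mul] at hmt; omega
      · exact h
    have htodd : t % 2 = 1 := by
      by_contra h
      have h2 : 2 ∣ t := by omega
      rcases h2 with ⟨c, hc⟩
      have : n = 2 * (c * p) := by rw [← hmt, hc]; ring
      omega
    rcases Nat.lt_or_ge 1 t with htgt | htle
    · -- t > 1
      have htm : t < n := by nlinarith [hp.two_le]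
      have ht4 : t ≠ 4 := by omega
      have htne0 := Fne0 ht4
      by_cases hpt : p ∣ t
      · -- p divides t : F n = eval (I^p) (cyclotomic t)
        have hts1 : ¬ ∃ q k : ℕ, q.Prime ∧ q % 4 = 3 ∧ 1 ≤ k ∧ t = q ^ k := by
          rintro ⟨q, k, hq, h3, hk, he⟩
          apply hyp1
          have hpq : p = q := by
            have : p ∣ q ^ k := he ▸ hpt
            exact (Nat.prime_dvd_prime_iff_eq hp hq).1 (hp.dvd_of_dvd_pow this)
          exact ⟨q, k + 1, hq, h3, by omega, by rw [← hmt, he, hpq]; ring⟩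
        have hts2 : ¬ ∃ q r k l : ℕ, q.Prime ∧ r.Prime ∧ q % 4 = 3 ∧ r % 4 = 3 ∧ q ≠ r ∧
            1 ≤ k ∧ 1 ≤ l ∧ t = q ^ k * r ^ l := by
          rintro ⟨q, r, k, l, hq, hr, h3q, h3r, hne, hk, hl, he⟩
          apply hyp2
          have hdvd : p ∣ q ^ k * r ^ l := he ▸ hpt
          rcases (Nat.Prime.dvd_mul hp).1 hdvd with hc | hc
          · have hpq : p = q := (Nat.prime_dvd_prime_iff_eq hp hq).1 (hp.dvd_of_dvd_pow hc)
            exact ⟨q, r, k + 1, l, hq, hr, h3q, h3r, hne, by omega, hl,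
              by rw [← hmt, he, hpq]; ring⟩
          · have hpr : p = r := (Nat.prime_dvd_prime_iff_eq hp hr).1 (hp.dvd_of_dvd_pow hc)
            exact ⟨q, r, k, l + 1, hq, hr, h3q, h3r, hne, hk, by omega,
              by rw [← hmt, he, hpr]; ring⟩
        have hFt := ih t htm (Nat.odd_iff.2 htodd) htgt hts1 hts2
        rw [← hmt, R1C hp hpt]
        rcases hp4 with h | h
        · rw [Ipow1 h, hFt]
        · rw [Ipow3 h, conj_half _ hFt, map_one]
      · -- p does not divide t
        have key := R2C hp hpt I
        rw [hmt] at key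
        rcases hp4 with h | h
        · rw [Ipow1 h] at key
          exact mul_right_cancel₀ htne0 (by rw [key, one_mul])
        · rw [Ipow3 h, conj_half _ rfl] at key
          by_cases h1 : ∃ q k : ℕ, q.Prime ∧ q % 4 = 3 ∧ 1 ≤ k ∧ t = q ^ k
          · exfalso
            rcases h1 with ⟨q, k, hq, h3, hk, he⟩
            apply hyp2
            have hpq : p ≠ q := by
              rintro rfl
              exact hpt (he ▸ dvd_pow_self p (by omega : k ≠ 0))
            exact ⟨q, p, k, 1, hq, hp, h3, h, fun hqq => hpq hqq.symm, hk, le_refl 1,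
              by rw [← hmt, he]; ring⟩
          · by_cases h2 : ∃ q r k l : ℕ, q.Prime ∧ r.Prime ∧ q % 4 = 3 ∧ r % 4 = 3 ∧ q ≠ r ∧
                1 ≤ k ∧ 1 ≤ l ∧ t = q ^ k * r ^ l
            · rcases h2 with ⟨q, r, k, l, hq, hr, h3q, h3r, hne, hk, hl, he⟩
              have hFt : (cyclotomic t ℂ).eval I = -1 := by
                rw [he]; exact Fqkrl hq hr h3q h3r hne hk l hl
              rw [hFt] at key
              have : (starRingEnd ℂ) (-1 : ℂ) = -1 := by simp
              rw [this] at key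
              exact mul_right_cancel₀ (by norm_num : (-1 : ℂ) ≠ 0)
                (by rw [key, one_mul])
            · have hFt := ih t htm (Nat.odd_iff.2 htodd) htgt h1 h2
              rw [hFt, mul_one, map_one] at key
              exact key
    · -- t = 1, so n = p is prime
      have ht : t = 1 := by omega
      have hnp : n = p := by rw [← hmt, ht, one_mul]
      rcases hp4 with h | h
      · rw [hnp]; exact FprimeI1 hp h
      · exfalso
        exact hyp1 ⟨p, 1, hp, h, le_refl 1, by rw [hnp, pow_one]⟩


theorem cyclotomic_eval_I :
    (cyclotomic 1 ℂ).eval I = I - 1 ∧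
    (cyclotomic 2 ℂ).eval I = I + 1 ∧
    (cyclotomic 4 ℂ).eval I = 0 ∧
    (∀ p k : ℕ, p.Prime → 1 ≤ k → (cyclotomic (4 * p ^ k) ℂ).eval I = p) ∧
    (∀ q k : ℕ, q.Prime → q % 4 = 3 → 1 ≤ k →
      (cyclotomic (q ^ k) ℂ).eval I = (-1) ^ (k + 1) * I) ∧
    (∀ q k : ℕ, q.Prime → q % 4 = 3 → 1 ≤ k →
      (cyclotomic (2 * q ^ k) ℂ).eval I = (-1) ^ k * I) ∧
    (∀ q r k l : ℕ, q.Prime → r.Prime → q % 4 = 3 → r % 4 = 3 → q ≠ r → 1 ≤ k → 1 ≤ l →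
      (cyclotomic (q ^ k * r ^ l) ℂ).eval I = -1 ∧
      (cyclotomic (2 * (q ^ k * r ^ l)) ℂ).eval I = -1) ∧
    (∀ n : ℕ, n ≠ 1 → n ≠ 2 → n ≠ 4 →
      (¬ ∃ p k : ℕ, p.Prime ∧ 1 ≤ k ∧ n = 4 * p ^ k) →
      (¬ ∃ q k : ℕ, q.Prime ∧ q % 4 = 3 ∧ 1 ≤ k ∧ (n = q ^ k ∨ n = 2 * q ^ k)) →
      (¬ ∃ q r k l : ℕ, q.Prime ∧ r.Prime ∧ q % 4 = 3 ∧ r % 4 = 3 ∧ q ≠ r ∧ 1 ≤ k ∧ 1 ≤ l ∧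
        (n = q ^ k * r ^ l ∨ n = 2 * (q ^ k * r ^ l))) →
      (cyclotomic n ℂ).eval I = 1) := by
  refine ⟨?_, ?_, ?_, ?_, ?_, ?_, ?_, ?_⟩
  · rw [cyclotomic_one]; simp
  · rw [cyclotomic_two]; simp
  · rw [show (4:ℕ) = 4 * 1 by norm_num, F4mul, show (2:ℕ) * 1 = 2 by norm_num, cyclotomic_two]
    simp
  · intro p k hp hk
    haveI : Fact p.Prime := ⟨hp⟩
    have hpk : 2 ≤ p ^ k := by
      calc 2 ≤ p := hp.two_le
      _ = p ^ 1 := (pow_one p).symm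
      _ ≤ p ^ k := Nat.pow_le_pow_right hp.pos hk
    rw [F4mul, negone2t hpk]
    obtain ⟨k', rfl⟩ : ∃ k', k = k' + 1 := ⟨k - 1, by omega⟩
    exact eval_one_cyclotomic_prime_pow k'
  · intro q k hq h3 hk
    exact Fqk hq h3 k hk
  · intro q k hq h3 hk
    have hqodd : q % 2 = 1 := by
      have := Nat.mod_mod_of_dvd q (by norm_num : 2 ∣ 4); omega
    have hm_odd : Odd (q ^ k) := (Nat.odd_iff.2 hqodd).pow
    have hm_gt : 1 < q ^ k := Nat.one_lt_pow (by omega) hq.one_lt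
    have key := F2odd hm_odd hm_gt
    rw [Fqk hq h3 k hk] at key
    have hne0 : ((-1 : ℂ)) ^ (k + 1) * I ≠ 0 :=
      mul_ne_zero (pow_ne_zero _ (by norm_num)) Complex.I_ne_zero
    apply mul_right_cancel₀ hne0
    rw [key]
    symm
    rw [show ((-1:ℂ)) ^ k * I * ((-1) ^ (k + 1) * I) = ((-1) ^ k * (-1) ^ (k + 1)) * (I * I) from
        by ring, ← pow_add, Complex.I_mul_I, show k + (k + 1) = 2 * k + 1 from by ring,
      Odd.neg_one_pow ⟨k, by ring⟩]
    norm_num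
  · intro q r k l hq hr h3q h3r hne hk hl
    have hbase := Fqkrl hq hr h3q h3r hne hk l hl
    refine ⟨hbase, ?_⟩
    have hqodd : q % 2 = 1 := by
      have := Nat.mod_mod_of_dvd q (by norm_num : 2 ∣ 4); omega
    have hrodd : r % 2 = 1 := by
      have := Nat.mod_mod_of_dvd r (by norm_num : 2 ∣ 4); omega
    have hm_odd : Odd (q ^ k * r ^ l) := ((Nat.odd_iff.2 hqodd).pow).mul ((Nat.odd_iff.2 hrodd).pow)
    have hm_gt : 1 < q ^ k * r ^ l := by
      have h1 : 1 < q ^ k := Nat.one_lt_pow (by omega) hq.one_lt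
      have h2 : 1 ≤ r ^ l := Nat.one_le_pow _ _ hr.pos
      nlinarith
    have key := F2odd hm_odd hm_gt
    rw [hbase] at key
    apply mul_right_cancel₀ (by norm_num : (-1 : ℂ) ≠ 0)
    rw [key]; norm_num
  · intro n h1 h2 h4 hA hB hC
    rcases Nat.eq_zero_or_pos n with rfl | hn0
    · rw [cyclotomic_zero]; simp
    by_cases hd4 : 4 ∣ n
    · obtain ⟨t, rfl⟩ := hd4
      have ht2 : 2 ≤ t := by
        rcases Nat.lt_or_ge t 2 with h | h
        · interval_cases t <;> simp_all
        · exact h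
      rw [F4mul, negone2t ht2]
      apply eval_one_cyclotomic_not_prime_pow
      intro p hp k hpk
      rcases Nat.eq_zero_or_pos k with rfl | hk
      · rw [pow_zero] at hpk; omega
      · exact hA ⟨p, k, hp, hk, by rw [hpk]⟩
    · by_cases hd2 : 2 ∣ n
      · obtain ⟨m, rfl⟩ := hd2
        have hmodd : m % 2 = 1 := by
          by_contra h
          exact hd4 (by omega)
        have hm1 : 1 < m := by omega
        have hFm : (cyclotomic m ℂ).eval I = 1 := by
          apply oddLemma m (Nat.odd_iff.2 hmodd) hm1
          · rintro ⟨q, k, hq, h3, hk, he⟩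
            exact hB ⟨q, k, hq, h3, hk, Or.inr (by rw [he])⟩
          · rintro ⟨q, r, k, l, hq, hr, h3q, h3r, hne, hk, hl, he⟩
            exact hC ⟨q, r, k, l, hq, hr, h3q, h3r, hne, hk, hl, Or.inr (by rw [he])⟩
        have key := F2odd (Nat.odd_iff.2 hmodd) hm1
        rw [hFm, mul_one] at key
        exact key
      · have hnodd : Odd n := Nat.odd_iff.2 (by omega)
        apply oddLemma n hnodd (by omega)
        · rintro ⟨q, k, hq, h3, hk, he⟩
          exact hB ⟨q, k, hq, h3, hk, Or.inl he⟩
        · rintro ⟨q, r, k, l, hq, hr, h3q, h3r, hne, hk, hl, he⟩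
          exact hC ⟨q, r, k, l, hq, hr, h3q, h3r, hne, hk, hl, Or.inl he⟩
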